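/- For every m ≥ 2, each element r_{i_1 ⋯ i_m} lies in W_m, and the set {r_{i_1 i_2 ⋯ i_m} : 1 ≤ i_1 < i_2 < ⋯ < i_m ≤ n} is a basis of the subspace W_m of V^{⊗m}; in particular W_m = 0 for m > n. -/

import Mathlib

open scoped TensorProduct
open PiTensorProduct
open Module

namespace OrePaper

variable (k : Type*) [Field k] (V : Type*) [AddCommGroup V] [Module k V]

/-- The canonical isomorphism `V^{⊗a} ⊗ V^{⊗b} ≃ V^{⊗(a+b)}`. -/
noncomputable abbrev mulPow (a b : ℕ) :
    ((⨂[k]^a V) ⊗[k] (⨂[k]^b V)) ≃ₗ[k] ⨂[k]^(a+b) V :=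
  TensorPower.mulEquiv

variable {k V}

/-- Identification of `V` with `V^{⊗1}`. -/
noncomputable def toPow1 : V ≃ₗ[k] ⨂[k]^1 V :=
  (PiTensorProduct.subsingletonEquiv (s := fun _ : Fin 1 => V) (0 : Fin 1)).symm

/-- `w ⊗ v ∈ V^{⊗(m+1)}` for `w ∈ V^{⊗m}`, `v ∈ V`. -/
noncomputable def append {m : ℕ} (w : ⨂[k]^m V) (v : V) : ⨂[k]^(m+1) V :=
  mulPow k V m 1 (w ⊗ₜ[k] toPow1 v)

/-- `v ⊗ w ∈ V^{⊗(m+1)}` for `v ∈ V`, `w ∈ V^{⊗m}`. -/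
noncomputable def prepend {m : ℕ} (v : V) (w : ⨂[k]^m V) : ⨂[k]^(m+1) V :=
  TensorPower.cast k V (Nat.add_comm 1 m) (mulPow k V 1 m (toPow1 v ⊗ₜ[k] w))

/-- The elements `r_{i_1 i_2 ⋯ i_m} ∈ V^{⊗m}`:
`r_{i_1 i_2} = x_{i_1} ⊗ x_{i_2} − x_{i_2} ⊗ x_{i_1}` and, recursively for `m ≥ 3`,
`r_{i_1 ⋯ i_m} = ∑_{j=1}^{m} (−1)^{m−j} r_{i_1 ⋯ î_j ⋯ i_m} ⊗ x_{i_j}`.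
(For a single index we set `r_i = x_i`, which is the convention making the left-handed
expansion hold also for `m = 2`.) -/
noncomputable def rElt {n : ℕ} (x : Fin n → V) : (m : ℕ) → (Fin m → Fin n) → ⨂[k]^m V
  | 0, _ => 0
  | 1, ι => toPow1 (x (ι 0))
  | 2, ι => append (toPow1 (x (ι 0))) (x (ι 1)) - append (toPow1 (x (ι 1))) (x (ι 0))
  | (m+3), ι => ∑ j : Fin (m+3),
      ((-1 : k)^((m+2) - (j : ℕ))) • append (rElt x (m+2) (ι ∘ j.succAbove)) (x (ι j))
/-- The quadratic relation space `R ⊆ V^{⊗2}` of the polynomial algebra: the span of the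
commutators `x_i ⊗ x_j − x_j ⊗ x_i`. -/
noncomputable def Rspan {n : ℕ} (x : Fin n → V) : Submodule k (⨂[k]^2 V) :=
  Submodule.span k {w : ⨂[k]^2 V | ∃ i j : Fin n,
    w = append (toPow1 (x i)) (x j) - append (toPow1 (x j)) (x i)}

/-- The subspace `V^{⊗s} ⊗ R ⊗ V^{⊗t}` of `V^{⊗(s+(2+t))}`: the image of
`V^{⊗s} ⊗ (R ⊗ V^{⊗t})` under the canonical map. -/
noncomputable def sandwich (R : Submodule k (⨂[k]^2 V)) (s t : ℕ) :
    Submodule k (⨂[k]^(s+(2+t)) V) :=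
  LinearMap.range
    ((mulPow k V s (2+t)).toLinearMap
      ∘ₗ TensorProduct.map LinearMap.id
          ((mulPow k V 2 t).toLinearMap ∘ₗ TensorProduct.map R.subtype LinearMap.id))

/-- The Koszul subspaces `W_m = ⋂_{s=0}^{m−2} V^{⊗s} ⊗ R ⊗ V^{⊗(m−s−2)}` of `V^{⊗m}`
for the polynomial algebra. -/
noncomputable def Wspace {n : ℕ} (x : Fin n → V) (m : ℕ) : Submodule k (⨂[k]^m V) :=
  ⨅ s : Fin (m-1),
    Submodule.map
      (TensorPower.cast k V
        (by have := s.isLt; omega : (s : ℕ) + (2 + (m - (s : ℕ) - 2)) = m)).toLinearMap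
      (sandwich (Rspan x) (s : ℕ) (m - (s : ℕ) - 2))

theorem toPow1_apply (v : V) : (toPow1 v : ⨂[k]^1 V) = PiTensorProduct.tprod k (fun _ : Fin 1 => v) := by
  rw [toPow1, LinearEquiv.symm_apply_eq, PiTensorProduct.subsingletonEquiv_apply_tprod]

theorem mulPow_tprod {a c : ℕ} (f : Fin a → V) (g : Fin c → V) :
    mulPow k V a c (PiTensorProduct.tprod k f ⊗ₜ[k] PiTensorProduct.tprod k g) = PiTensorProduct.tprod k (Fin.append f g) := by
  rw [← TensorPower.gMul_def, TensorPower.tprod_mul_tprod]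

theorem append_tprod {m : ℕ} (f : Fin m → V) (v : V) :
    append (PiTensorProduct.tprod k f) v = PiTensorProduct.tprod k (Fin.snoc f v) := by
  rw [append, toPow1_apply, mulPow_tprod, Fin.append_right_eq_snoc]

/-- Two bases with the same vectors give the same coordinates. -/
theorem repr_eq_of_basis_eq {ι : Type*} {M : Type*} [AddCommGroup M] [Module k M]
    (b₁ b₂ : Basis ι k M) (h : ∀ i, b₁ i = b₂ i) (w : M) (i : ι) :
    b₁.repr w i = b₂.repr w i := by
  have : (b₁.repr : M →ₗ[k] ι →₀ k) = (b₂.repr : M →ₗ[k] ι →₀ k) :=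
    b₁.ext fun j => by
      simp only [LinearEquiv.coe_coe]
      rw [h j, Basis.repr_self, ← h j, Basis.repr_self]
  exact DFunLike.congr_fun (DFunLike.congr_fun this w) i

variable {n : ℕ}

/-- The snoc equivalence on index tuples. -/
def snocEquiv (n m : ℕ) : ((Fin m → Fin n) × Fin n) ≃ (Fin (m+1) → Fin n) where
  toFun p := Fin.snoc p.1 p.2
  invFun K := (fun i => K i.castSucc, K (Fin.last m))
  left_inv p := by
    ext i
    · simp
    · simp
  right_inv K := by
    funext q
    refine Fin.lastCases ?_ ?_ q <;> simp

/-- The standard basis of the `m`-th tensor power of `V` indexed by tuples. -/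
noncomputable def tb (b : Basis (Fin n) k V) : (m : ℕ) → Basis (Fin m → Fin n) k (⨂[k]^m V)
  | 0 => ((Basis.singleton Unit k).map (PiTensorProduct.isEmptyEquiv (Fin 0)).symm).reindex
      (Equiv.ofUnique _ _)
  | (m+1) => (((tb b m).tensorProduct (b.map toPow1)).map (mulPow k V m 1)).reindex
      (snocEquiv n m)

theorem tb_apply (b : Basis (Fin n) k V) (m : ℕ) (J : Fin m → Fin n) :
    tb b m J = PiTensorProduct.tprod k (fun s => b (J s)) := by
  induction m with
  | zero =>
      rw [tb, Basis.reindex_apply, Basis.map_apply]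
      simp only [Basis.singleton_apply]
      rw [LinearEquiv.symm_apply_eq, PiTensorProduct.isEmptyEquiv_apply_tprod]
  | succ m ih =>
      rw [tb, Basis.reindex_apply, Basis.map_apply, Basis.tensorProduct_apply', ih,
        Basis.map_apply, toPow1_apply, mulPow_tprod, Fin.append_right_eq_snoc]
      congr 1
      funext q
      refine Fin.lastCases ?_ ?_ q
      · simp [snocEquiv]
      · intro i
        simp [snocEquiv]

theorem tb_repr_self (b : Basis (Fin n) k V) (m : ℕ) (J K : Fin m → Fin n) :
    (tb b m).repr (tb b m J) K = if J = K then 1 else 0 := by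
  rw [Basis.repr_self, Finsupp.single_apply]

theorem comp_append {a c : ℕ} (x : Fin n → V) (J : Fin a → Fin n) (L : Fin c → Fin n) :
    (fun s => x (Fin.append J L s)) = Fin.append (fun s => x (J s)) (fun s => x (L s)) := by
  funext q
  refine Fin.addCases (fun i => ?_) (fun i => ?_) q <;>
    simp [Fin.append_left, Fin.append_right]

theorem tb_repr_mul (b : Basis (Fin n) k V) {a c : ℕ} (u : ⨂[k]^a V) (w : ⨂[k]^c V)
    (K : Fin (a+c) → Fin n) :
    (tb b (a+c)).repr (mulPow k V a c (u ⊗ₜ[k] w)) K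
      = (tb b a).repr u (fun i => K (Fin.castAdd c i))
        * (tb b c).repr w (fun i => K (Fin.natAdd a i)) := by
  set B' : Basis (Fin (a+c) → Fin n) k (⨂[k]^(a+c) V) :=
    ((((tb b a).tensorProduct (tb b c)).map (mulPow k V a c)).reindex (Fin.appendEquiv a c))
  have hB' : ∀ K, B' K = tb b (a+c) K := by
    intro K
    rw [Basis.reindex_apply, Basis.map_apply, Basis.tensorProduct_apply']
    simp only [Fin.appendEquiv_symm_apply]
    rw [tb_apply, tb_apply, mulPow_tprod, tb_apply, ← comp_append]
    congr 1
    simp only [Fin.append_castAdd_natAdd]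
  rw [← repr_eq_of_basis_eq B' (tb b (a+c)) hB']
  rw [Basis.repr_reindex_apply, Basis.map_repr]
  simp only [LinearEquiv.trans_apply, LinearEquiv.symm_apply_apply]
  rw [show (Fin.appendEquiv a c).symm K
      = ((fun i => K (Fin.castAdd c i)), (fun i => K (Fin.natAdd a i))) from rfl]
  rw [Basis.tensorProduct_repr_tmul_apply]
  rw [smul_eq_mul, mul_comm]

theorem tb_repr_cast (b : Basis (Fin n) k V) {a a' : ℕ} (h : a = a') (w : ⨂[k]^a V)
    (K : Fin a' → Fin n) :
    (tb b a').repr (TensorPower.cast k V h w) K = (tb b a).repr w (fun i => K (Fin.cast h i)) := by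
  set e : (Fin a → Fin n) ≃ (Fin a' → Fin n) :=
    Equiv.arrowCongr (finCongr h) (Equiv.refl (Fin n))
  set B' : Basis (Fin a' → Fin n) k (⨂[k]^a' V) :=
    ((tb b a).map (TensorPower.cast k V h)).reindex e
  have hB' : ∀ K, B' K = tb b a' K := by
    intro K
    rw [Basis.reindex_apply, Basis.map_apply, tb_apply, TensorPower.cast_tprod, tb_apply]
    congr 1
  rw [← repr_eq_of_basis_eq B' (tb b a') hB']
  rw [Basis.repr_reindex_apply, Basis.map_repr]
  simp only [LinearEquiv.trans_apply, LinearEquiv.symm_apply_apply]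
  congr 1

theorem tb1_repr (b : Basis (Fin n) k V) (v : V) (L : Fin 1 → Fin n) :
    (tb b 1).repr (toPow1 v) L = b.repr v (L 0) := by
  set e : Fin n ≃ (Fin 1 → Fin n) :=
    { toFun := fun i => fun _ => i
      invFun := fun L => L 0
      left_inv := fun i => rfl
      right_inv := fun L => funext fun s => by rw [Subsingleton.elim s 0] }
  set B' : Basis (Fin 1 → Fin n) k (⨂[k]^1 V) := (b.map toPow1).reindex e
  have hB' : ∀ L, B' L = tb b 1 L := by
    intro L
    rw [Basis.reindex_apply, Basis.map_apply, toPow1_apply, tb_apply]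
    congr 1
    funext s
    rw [show e.symm L = L 0 from rfl, Subsingleton.elim s 0]
  rw [← repr_eq_of_basis_eq B' (tb b 1) hB', Basis.repr_reindex_apply, Basis.map_repr]
  simp only [LinearEquiv.trans_apply]
  rw [LinearEquiv.symm_apply_apply]
  rfl

theorem tb_repr_append (b : Basis (Fin n) k V) {m : ℕ} (w : ⨂[k]^m V) (v : V)
    (K : Fin (m+1) → Fin n) :
    (tb b (m+1)).repr (append w v) K
      = (tb b m).repr w (fun i => K i.castSucc) * b.repr v (K (Fin.last m)) := by
  rw [append, tb_repr_mul, tb1_repr]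
  rfl
theorem rElt_one {x : Fin n → V} (ι : Fin 1 → Fin n) :
    rElt (k := k) x 1 ι = toPow1 (x (ι 0)) := rfl

theorem rElt_succ {x : Fin n → V} (m : ℕ) (ι : Fin (m+2) → Fin n) :
    rElt (k := k) x (m+2) ι = ∑ j : Fin (m+2),
      ((-1 : k)^((m+1) - (j : ℕ))) • append (rElt x (m+1) (ι ∘ j.succAbove)) (x (ι j)) := by
  match m with
  | 0 =>
      rw [show rElt (k := k) x 2 ι
          = append (toPow1 (x (ι 0))) (x (ι 1)) - append (toPow1 (x (ι 1))) (x (ι 0)) from rfl]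
      rw [Fin.sum_univ_two]
      have h0 : ((0 : Fin 2) : ℕ) = 0 := rfl
      have h1 : ((1 : Fin 2) : ℕ) = 1 := rfl
      rw [h0, h1]
      have e0 : ((ι ∘ Fin.succAbove (0 : Fin 2)) (0 : Fin 1)) = ι 1 := rfl
      have e1 : ((ι ∘ Fin.succAbove (1 : Fin 2)) (0 : Fin 1)) = ι 0 := rfl
      rw [rElt_one, rElt_one, e0, e1]
      norm_num
      abel
  | (m+1) => rfl

/-- The 0/1 matrix whose determinant gives the coordinates of `rElt`. -/
def dmat (ι K : Fin m → Fin n) : Matrix (Fin m) (Fin m) k :=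
  Matrix.of fun s t => if ι t = K s then 1 else 0

theorem rElt_repr (b : Basis (Fin n) k V) (m : ℕ) (ι K : Fin (m+1) → Fin n) :
    (tb b (m+1)).repr (rElt (fun i => b i) (m+1) ι) K = (dmat ι K : Matrix _ _ k).det := by
  induction m with
  | zero =>
      rw [rElt_one, tb1_repr, Matrix.det_fin_one]
      rw [Basis.repr_self_apply]
      rfl
  | succ m ih =>
      rw [rElt_succ, map_sum, Finsupp.coe_finset_sum, Finset.sum_apply]
      rw [Matrix.det_succ_row _ (Fin.last (m+1))]
      refine Finset.sum_congr rfl fun j _ => ?_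
      rw [map_smul, Finsupp.smul_apply, tb_repr_append, ih, smul_eq_mul]
      rw [Basis.repr_self_apply]
      have hsub : ((dmat ι K).submatrix (Fin.last (m+1)).succAbove j.succAbove : Matrix _ _ k)
          = dmat (ι ∘ j.succAbove) (fun i => K i.castSucc) := by
        funext s t
        simp [dmat, Matrix.submatrix, Fin.succAbove_last]
      have hA : (dmat ι K : Matrix _ _ k) (Fin.last (m+1)) j
          = if ι j = K (Fin.last (m+1)) then 1 else 0 := rfl
      rw [hsub, hA]
      have hsgn : ((-1 : k))^((m+1) - (j : ℕ)) = (-1)^((Fin.last (m+1) : ℕ) + (j : ℕ)) := by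
        have hj : (j : ℕ) ≤ m + 1 := Nat.le_of_lt_succ j.isLt
        have : (Fin.last (m+1) : ℕ) + (j : ℕ) = ((m+1) - (j : ℕ)) + 2 * (j : ℕ) := by
          simp only [Fin.val_last]; omega
        rw [this, pow_add, pow_mul, neg_one_sq, one_pow, mul_one]
      rw [hsgn]
      ring
theorem pair_eq_iff {i j : Fin n} {M : Fin 2 → Fin n} :
    (![i, j] : Fin 2 → Fin n) = M ↔ i = M 0 ∧ j = M 1 := by
  constructor
  · rintro rfl; exact ⟨rfl, rfl⟩
  · rintro ⟨h0, h1⟩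
    funext q
    fin_cases q
    · exact h0
    · exact h1

theorem rpair_eq (b : Basis (Fin n) k V) (i j : Fin n) :
    append (toPow1 (b i)) (b j) = tb b 2 ![i, j] := by
  rw [toPow1_apply, append_tprod, tb_apply]
  congr 1
  funext s
  fin_cases s
  · simp [Fin.snoc]
  · simp [Fin.snoc]

theorem Rspan_repr_diag (b : Basis (Fin n) k V) {r : ⨂[k]^2 V}
    (hr : r ∈ Rspan (fun i => b i)) (M : Fin 2 → Fin n) (hM : M 0 = M 1) :
    (tb b 2).repr r M = 0 := by
  induction hr using Submodule.span_induction with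
  | mem g hg =>
      obtain ⟨i, j, rfl⟩ := hg
      rw [rpair_eq, rpair_eq, map_sub, Finsupp.sub_apply, tb_repr_self, tb_repr_self]
      by_cases h1 : (![i, j] : Fin 2 → Fin n) = M
      · obtain ⟨hi, hj⟩ := pair_eq_iff.mp h1
        have h2 : (![j, i] : Fin 2 → Fin n) = M :=
          pair_eq_iff.mpr ⟨by rw [hj, hM], by rw [hi, ← hM]⟩
        rw [if_pos h1, if_pos h2, sub_self]
      · by_cases h2 : (![j, i] : Fin 2 → Fin n) = M
        · obtain ⟨hj, hi⟩ := pair_eq_iff.mp h2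
          exact absurd (pair_eq_iff.mpr ⟨by rw [hi, hM], by rw [hj, ← hM]⟩) h1
        · rw [if_neg h1, if_neg h2, sub_self]
  | zero => simp
  | add y z _ _ hy hz => rw [map_add, Finsupp.add_apply, hy, hz, add_zero]
  | smul a y _ hy => rw [map_smul, Finsupp.smul_apply, hy, smul_zero]

theorem Rspan_repr_swap (b : Basis (Fin n) k V) {r : ⨂[k]^2 V}
    (hr : r ∈ Rspan (fun i => b i)) (M : Fin 2 → Fin n) :
    (tb b 2).repr r ![M 1, M 0] = - (tb b 2).repr r M := by
  induction hr using Submodule.span_induction with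
  | mem g hg =>
      obtain ⟨i, j, rfl⟩ := hg
      rw [rpair_eq, rpair_eq, map_sub, Finsupp.sub_apply, Finsupp.sub_apply,
        tb_repr_self, tb_repr_self, tb_repr_self, tb_repr_self]
      have e1 : ((![i, j] : Fin 2 → Fin n) = ![M 1, M 0]) ↔ ((![j, i] : Fin 2 → Fin n) = M) := by
        rw [pair_eq_iff, pair_eq_iff]
        constructor
        · rintro ⟨h1, h2⟩
          exact ⟨by simpa using h2, by simpa using h1⟩
        · rintro ⟨h1, h2⟩
          exact ⟨by simpa using h2, by simpa using h1⟩
      have e2 : ((![j, i] : Fin 2 → Fin n) = ![M 1, M 0]) ↔ ((![i, j] : Fin 2 → Fin n) = M) := by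
        rw [pair_eq_iff, pair_eq_iff]
        constructor
        · rintro ⟨h1, h2⟩
          exact ⟨by simpa using h2, by simpa using h1⟩
        · rintro ⟨h1, h2⟩
          exact ⟨by simpa using h2, by simpa using h1⟩
      simp only [e1, e2]
      split_ifs <;> ring
  | zero => simp
  | add y z _ _ hy hz =>
      rw [map_add, Finsupp.add_apply, Finsupp.add_apply, hy, hz, neg_add]
  | smul a y _ hy =>
      rw [map_smul, Finsupp.smul_apply, Finsupp.smul_apply, hy, smul_neg]
def p0 (s t : ℕ) : Fin (s+(2+t)) := Fin.natAdd s (Fin.castAdd t (0 : Fin 2))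
def p1 (s t : ℕ) : Fin (s+(2+t)) := Fin.natAdd s (Fin.castAdd t (1 : Fin 2))

def mid (s t : ℕ) {n : ℕ} (K : Fin (s+(2+t)) → Fin n) : Fin 2 → Fin n :=
  fun q => K (Fin.natAdd s (Fin.castAdd t q))

theorem p0_val (s t : ℕ) : ((p0 s t : Fin (s+(2+t))) : ℕ) = s := by simp [p0]
theorem p1_val (s t : ℕ) : ((p1 s t : Fin (s+(2+t))) : ℕ) = s + 1 := by simp [p1]

theorem swap_castAdd (s t : ℕ) (i : Fin s) :
    Equiv.swap (p0 s t) (p1 s t) (Fin.castAdd (2+t) i) = Fin.castAdd (2+t) i := by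
  apply Equiv.swap_apply_of_ne_of_ne <;>
    · apply Fin.ne_of_val_ne
      simp only [Fin.coe_castAdd, p0_val, p1_val]
      omega

theorem swap_natAdd (s t : ℕ) (i : Fin t) :
    Equiv.swap (p0 s t) (p1 s t) (Fin.natAdd s (Fin.natAdd 2 i))
      = Fin.natAdd s (Fin.natAdd 2 i) := by
  apply Equiv.swap_apply_of_ne_of_ne <;>
    · apply Fin.ne_of_val_ne
      simp only [Fin.coe_natAdd, p0_val, p1_val]
      omega

theorem mid_zero (s t : ℕ) {n : ℕ} (K : Fin (s+(2+t)) → Fin n) : mid s t K 0 = K (p0 s t) := rfl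
theorem mid_one (s t : ℕ) {n : ℕ} (K : Fin (s+(2+t)) → Fin n) : mid s t K 1 = K (p1 s t) := rfl

theorem mid_swap (s t : ℕ) {n : ℕ} (K : Fin (s+(2+t)) → Fin n) :
    mid s t (K ∘ (Equiv.swap (p0 s t) (p1 s t))) = ![mid s t K 1, mid s t K 0] := by
  funext q
  fin_cases q
  · show K (Equiv.swap (p0 s t) (p1 s t) (p0 s t)) = _
    rw [Equiv.swap_apply_left]
    rfl
  · show K (Equiv.swap (p0 s t) (p1 s t) (p1 s t)) = _
    rw [Equiv.swap_apply_right]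
    rfl

theorem left_swap (s t : ℕ) {n : ℕ} (K : Fin (s+(2+t)) → Fin n) :
    (fun i => (K ∘ (Equiv.swap (p0 s t) (p1 s t))) (Fin.castAdd (2+t) i))
      = fun i => K (Fin.castAdd (2+t) i) := by
  funext i
  simp only [Function.comp_apply, swap_castAdd]

theorem right_swap (s t : ℕ) {n : ℕ} (K : Fin (s+(2+t)) → Fin n) :
    (fun i => (K ∘ (Equiv.swap (p0 s t) (p1 s t))) (Fin.natAdd s (Fin.natAdd 2 i)))
      = fun i => K (Fin.natAdd s (Fin.natAdd 2 i)) := by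
  funext i
  simp only [Function.comp_apply, swap_natAdd]

theorem recomp_mid {s t n : ℕ} (K : Fin (s+(2+t)) → Fin n) :
    Fin.append (fun i => K (Fin.castAdd (2+t) i))
      (Fin.append (mid s t K) (fun i => K (Fin.natAdd s (Fin.natAdd 2 i)))) = K := by
  funext q
  refine Fin.addCases (fun i => ?_) (fun i => ?_) q
  · rw [Fin.append_left]
  · rw [Fin.append_right]
    refine Fin.addCases (fun i2 => ?_) (fun i2 => ?_) i
    · rw [Fin.append_left]; rfl
    · rw [Fin.append_right]

theorem recomp_swap {s t n : ℕ} (K : Fin (s+(2+t)) → Fin n) :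
    Fin.append (fun i => K (Fin.castAdd (2+t) i))
      (Fin.append ![mid s t K 1, mid s t K 0] (fun i => K (Fin.natAdd s (Fin.natAdd 2 i))))
      = K ∘ (Equiv.swap (p0 s t) (p1 s t)) := by
  have h := recomp_mid (K := K ∘ (Equiv.swap (p0 s t) (p1 s t)))
  rw [mid_swap, left_swap, right_swap] at h
  exact h

theorem repr_smid (b : Basis (Fin n) k V) (s t : ℕ) (u : ⨂[k]^s V) (r : ⨂[k]^2 V)
    (v : ⨂[k]^t V) (K : Fin (s+(2+t)) → Fin n) :
    (tb b (s+(2+t))).repr (mulPow k V s (2+t) (u ⊗ₜ[k] (mulPow k V 2 t (r ⊗ₜ[k] v)))) K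
      = (tb b s).repr u (fun i => K (Fin.castAdd (2+t) i))
        * ((tb b 2).repr r (mid s t K)
        * (tb b t).repr v (fun i => K (Fin.natAdd s (Fin.natAdd 2 i)))) := by
  rw [tb_repr_mul, tb_repr_mul]
  rfl

theorem mulPow_tb (b : Basis (Fin n) k V) {s t : ℕ} (J : Fin s → Fin n) (P : Fin 2 → Fin n)
    (L : Fin t → Fin n) :
    mulPow k V s (2+t) ((tb b s J) ⊗ₜ[k] (mulPow k V 2 t ((tb b 2 P) ⊗ₜ[k] (tb b t L))))
      = tb b (s+(2+t)) (Fin.append J (Fin.append P L)) := by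
  rw [tb_apply, tb_apply, tb_apply, mulPow_tprod, mulPow_tprod, tb_apply,
    comp_append, comp_append]

theorem mem_sandwich_iff (b : Basis (Fin n) k V) (s t : ℕ) (w : ⨂[k]^(s+(2+t)) V) :
    w ∈ sandwich (Rspan (fun i => b i)) s t ↔
      ((∀ K : Fin (s+(2+t)) → Fin n, K (p0 s t) = K (p1 s t) → (tb b _).repr w K = 0)
      ∧ (∀ K : Fin (s+(2+t)) → Fin n,
          (tb b _).repr w (K ∘ (Equiv.swap (p0 s t) (p1 s t))) = - (tb b _).repr w K)) := by
  classical
  set F : ((⨂[k]^s V) ⊗[k] ((Rspan (fun i => b i) : Submodule k (⨂[k]^2 V)) ⊗[k] (⨂[k]^t V)))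
      →ₗ[k] ⨂[k]^(s+(2+t)) V :=
    ((mulPow k V s (2+t)).toLinearMap
      ∘ₗ TensorProduct.map LinearMap.id
          ((mulPow k V 2 t).toLinearMap ∘ₗ
            TensorProduct.map (Rspan (fun i => b i)).subtype LinearMap.id)) with hF
  have hFtmul : ∀ (u : ⨂[k]^s V) (r : Rspan (fun i => b i)) (v : ⨂[k]^t V),
      F (u ⊗ₜ[k] (r ⊗ₜ[k] v)) = mulPow k V s (2+t) (u ⊗ₜ[k] (mulPow k V 2 t ((r : ⨂[k]^2 V) ⊗ₜ[k] v))) := by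
    intro u r v
    simp [hF, TensorProduct.map_tmul]
  have hmem : w ∈ sandwich (Rspan (fun i => b i)) s t ↔ ∃ z, F z = w := by
    rw [sandwich]
    exact Iff.rfl
  rw [hmem]
  constructor
  · rintro ⟨z, rfl⟩
    clear hmem
    induction z using TensorProduct.induction_on with
    | zero =>
        constructor <;> intro K <;> simp
    | add z1 z2 h1 h2 =>
        obtain ⟨h1a, h1b⟩ := h1
        obtain ⟨h2a, h2b⟩ := h2
        constructor
        · intro K hK
          rw [map_add, map_add, Finsupp.add_apply, h1a K hK, h2a K hK, add_zero]
        · intro K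
          rw [map_add, map_add, Finsupp.add_apply, Finsupp.add_apply, h1b K, h2b K, neg_add]
    | tmul u y =>
        induction y using TensorProduct.induction_on with
        | zero =>
            constructor <;> intro K <;> simp [TensorProduct.tmul_zero]
        | add y1 y2 h1 h2 =>
            obtain ⟨h1a, h1b⟩ := h1
            obtain ⟨h2a, h2b⟩ := h2
            constructor
            · intro K hK
              rw [TensorProduct.tmul_add, map_add, map_add, Finsupp.add_apply,
                h1a K hK, h2a K hK, add_zero]
            · intro K
              rw [TensorProduct.tmul_add, map_add, map_add, Finsupp.add_apply,
                Finsupp.add_apply, h1b K, h2b K, neg_add]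
        | tmul r v =>
            constructor
            · intro K hK
              rw [hFtmul, repr_smid, Rspan_repr_diag b r.2 (mid s t K) hK, zero_mul, mul_zero]
            · intro K
              rw [hFtmul, repr_smid, repr_smid, left_swap, right_swap, mid_swap,
                Rspan_repr_swap b r.2 (mid s t K)]
              ring
  · rintro ⟨hd, hs⟩
    have hgen : ∀ K : Fin (s+(2+t)) → Fin n,
        (tb b 2 (mid s t K) - tb b 2 ![mid s t K 1, mid s t K 0])
          ∈ Rspan (fun i => b i) := by
      intro K
      apply Submodule.subset_span
      refine ⟨K (p0 s t), K (p1 s t), ?_⟩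
      rw [rpair_eq, rpair_eq]
      have hm : mid s t K = ![K (p0 s t), K (p1 s t)] := by
        funext q; fin_cases q <;> rfl
      rw [hm]
      simp
    set c : (Fin (s+(2+t)) → Fin n) → k := fun K => (tb b _).repr w K with hc
    set pre : ((⨂[k]^s V) ⊗[k] ((Rspan (fun i => b i) : Submodule k (⨂[k]^2 V)) ⊗[k] (⨂[k]^t V))) :=
      ∑ K : Fin (s+(2+t)) → Fin n,
        if K (p0 s t) < K (p1 s t) then
          c K • ((tb b s) (fun i => K (Fin.castAdd (2+t) i)) ⊗ₜ[k]
            ((⟨_, hgen K⟩ : Rspan (fun i => b i)) ⊗ₜ[k]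
              (tb b t) (fun i => K (Fin.natAdd s (Fin.natAdd 2 i)))))
        else 0 with hpre
    refine ⟨pre, ?_⟩
    apply Basis.ext_elem (tb b (s+(2+t)))
    intro K'
    rw [hpre, map_sum, map_sum, Finsupp.coe_finset_sum, Finset.sum_apply]
    have hterm : ∀ K : Fin (s+(2+t)) → Fin n,
        (tb b (s+(2+t))).repr (F (if K (p0 s t) < K (p1 s t) then
          c K • ((tb b s) (fun i => K (Fin.castAdd (2+t) i)) ⊗ₜ[k]
            ((⟨_, hgen K⟩ : Rspan (fun i => b i)) ⊗ₜ[k]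
              (tb b t) (fun i => K (Fin.natAdd s (Fin.natAdd 2 i)))))
          else 0)) K'
        = (if K = K' then (if K (p0 s t) < K (p1 s t) then c K else 0) else 0)
          - (if K = K' ∘ (Equiv.swap (p0 s t) (p1 s t)) then
              (if K (p0 s t) < K (p1 s t) then c K else 0) else 0) := by
      intro K
      by_cases h : K (p0 s t) < K (p1 s t)
      · rw [if_pos h, map_smul, map_smul, Finsupp.smul_apply, smul_eq_mul, hFtmul]
        rw [show ((⟨_, hgen K⟩ : Rspan (fun i => b i)) : ⨂[k]^2 V)
            = tb b 2 (mid s t K) - tb b 2 ![mid s t K 1, mid s t K 0] from rfl]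
        rw [TensorProduct.sub_tmul, map_sub, TensorProduct.tmul_sub, map_sub, map_sub,
          Finsupp.sub_apply, mulPow_tb, mulPow_tb, recomp_mid, recomp_swap,
          tb_repr_self, tb_repr_self]
        have e3 : (K ∘ (Equiv.swap (p0 s t) (p1 s t)) = K')
            ↔ (K = K' ∘ (Equiv.swap (p0 s t) (p1 s t))) := by
          constructor
          · rintro rfl
            funext q
            simp [Equiv.swap_apply_self]
          · rintro rfl
            funext q
            simp [Equiv.swap_apply_self]
        simp only [e3]
        split_ifs <;> ring
      · rw [if_neg h]
        simp [h]
    rw [Finset.sum_congr rfl (fun K _ => hterm K), Finset.sum_sub_distrib,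
      Finset.sum_ite_eq' Finset.univ K'
        (fun K => if K (p0 s t) < K (p1 s t) then c K else 0),
      Finset.sum_ite_eq' Finset.univ (K' ∘ (Equiv.swap (p0 s t) (p1 s t)))
        (fun K => if K (p0 s t) < K (p1 s t) then c K else 0)]
    simp only [Finset.mem_univ, if_true]
    have e0 : (K' ∘ (Equiv.swap (p0 s t) (p1 s t))) (p0 s t) = K' (p1 s t) := by
      simp [Equiv.swap_apply_left]
    have e1 : (K' ∘ (Equiv.swap (p0 s t) (p1 s t))) (p1 s t) = K' (p0 s t) := by
      simp [Equiv.swap_apply_right]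
    rw [e0, e1]
    rcases lt_trichotomy (K' (p0 s t)) (K' (p1 s t)) with hlt | heq | hgt
    · rw [if_pos hlt, if_neg (by omega)]
      simp [hc]
    · rw [if_neg (by omega), if_neg (by omega)]
      rw [hd K' heq]
      ring
    · rw [if_neg (by omega), if_pos hgt]
      have hcc : c (K' ∘ (Equiv.swap (p0 s t) (p1 s t)))
          = (tb b (s+(2+t))).repr w (K' ∘ (Equiv.swap (p0 s t) (p1 s t))) := rfl
      rw [hcc, hs K']
      ring

theorem cast_swap {a a' : ℕ} (h : a = a') (p q z : Fin a) :
    Fin.cast h (Equiv.swap p q z) = Equiv.swap (Fin.cast h p) (Fin.cast h q) (Fin.cast h z) :=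
  (((finCongr h).injective).swap_apply p q z).symm

set_option maxHeartbeats 4000000 in
theorem memW_iff (b : Basis (Fin n) k V) (m : ℕ) (w : ⨂[k]^m V) :
    w ∈ Wspace (fun i => b i) m ↔ ∀ (s : ℕ) (h2 : s + 2 ≤ m),
      ((∀ K : Fin m → Fin n, K ⟨s, by omega⟩ = K ⟨s+1, by omega⟩ → (tb b m).repr w K = 0)
      ∧ (∀ K : Fin m → Fin n,
          (tb b m).repr w (K ∘ (Equiv.swap (⟨s, by omega⟩ : Fin m) ⟨s+1, by omega⟩))
            = - (tb b m).repr w K)) := by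
  rw [Wspace, Submodule.mem_iInf]
  constructor
  · intro h s hs2
    have hsm : s < m - 1 := by omega
    have hmem := h ⟨s, hsm⟩
    have hvs : ((⟨s, hsm⟩ : Fin (m-1)) : ℕ) = s := rfl
    set t := m - s - 2 with ht
    have hcast : s + (2 + t) = m := by omega
    rw [Submodule.mem_map_equiv, mem_sandwich_iff] at hmem
    obtain ⟨hA, hB⟩ := hmem
    have hsymm : (TensorPower.cast k V (by omega : s + (2 + (m - s - 2)) = m)).symm w
        = TensorPower.cast k V hcast.symm w := by
      rw [TensorPower.cast_symm]
    constructor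
    · intro K hK
      have h1 := hA (fun q => K (Fin.cast hcast q)) ?_
      · rw [hsymm, tb_repr_cast] at h1
        have hR : (fun i => (fun q => K (Fin.cast hcast q)) (Fin.cast hcast.symm i)) = K := by
          funext i
          rfl
        rw [hR] at h1
        exact h1
      · show K (Fin.cast hcast (p0 s t)) = K (Fin.cast hcast (p1 s t))
        have e0 : Fin.cast hcast (p0 s t) = (⟨s, by omega⟩ : Fin m) := by
          apply Fin.ext; simp [p0_val]
        have e1 : Fin.cast hcast (p1 s t) = (⟨s+1, by omega⟩ : Fin m) := by
          apply Fin.ext; simp [p1_val]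
        rw [e0, e1]
        exact hK
    · intro K
      have h1 := hB (fun q => K (Fin.cast hcast q))
      rw [hsymm, tb_repr_cast, tb_repr_cast] at h1
      have e0 : Fin.cast hcast (p0 s t) = (⟨s, by omega⟩ : Fin m) := by
        apply Fin.ext; simp [p0_val]
      have e1 : Fin.cast hcast (p1 s t) = (⟨s+1, by omega⟩ : Fin m) := by
        apply Fin.ext; simp [p1_val]
      have hL : (fun i => ((fun q => K (Fin.cast hcast q))
            ∘ (Equiv.swap (p0 s t) (p1 s t))) (Fin.cast hcast.symm i))
          = K ∘ (Equiv.swap (⟨s, by omega⟩ : Fin m) ⟨s+1, by omega⟩) := by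
        funext i
        show K (Fin.cast hcast (Equiv.swap (p0 s t) (p1 s t) (Fin.cast hcast.symm i))) = _
        rw [cast_swap, e0, e1]
        rfl
      have hR : (fun i => (fun q => K (Fin.cast hcast q)) (Fin.cast hcast.symm i)) = K := by
        funext i
        rfl
      rw [hL, hR] at h1
      exact h1
  · intro h sf
    obtain ⟨s, hsm⟩ := sf
    have hs2 : s + 2 ≤ m := by omega
    obtain ⟨hA, hB⟩ := h s hs2
    set t := m - s - 2 with ht
    have hcast : s + (2 + t) = m := by omega
    show w ∈ Submodule.map
      (TensorPower.cast k V (by omega : s + (2 + (m - s - 2)) = m)).toLinearMap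
      (sandwich (Rspan fun i => b i) s (m - s - 2))
    rw [Submodule.mem_map_equiv, mem_sandwich_iff]
    have hsymm : (TensorPower.cast k V (by omega : s + (2 + (m - s - 2)) = m)).symm w
        = TensorPower.cast k V hcast.symm w := by
      rw [TensorPower.cast_symm]
    have e0 : ∀ K' : Fin (s+(2+t)) → Fin n,
        K' (p0 s t) = K' (Fin.cast hcast.symm (⟨s, by omega⟩ : Fin m)) := by
      intro K'; rfl
    have e1 : ∀ K' : Fin (s+(2+t)) → Fin n,
        K' (p1 s t) = K' (Fin.cast hcast.symm (⟨s+1, by omega⟩ : Fin m)) := by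
      intro K'; rfl
    constructor
    · intro K' hK'
      rw [hsymm, tb_repr_cast]
      apply hA
      exact (e0 K').symm.trans (hK'.trans (e1 K'))
    · intro K'
      rw [hsymm, tb_repr_cast, tb_repr_cast]
      have hL : (fun i => (K' ∘ (Equiv.swap (p0 s t) (p1 s t))) (Fin.cast hcast.symm i))
          = (fun i => K' (Fin.cast hcast.symm i))
              ∘ (Equiv.swap (⟨s, by omega⟩ : Fin m) ⟨s+1, by omega⟩) := by
        funext i
        show K' (Equiv.swap (p0 s t) (p1 s t) (Fin.cast hcast.symm i)) = _
        have : (Equiv.swap (⟨s, by omega⟩ : Fin m) (⟨s+1, by omega⟩ : Fin m)) i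
            = Fin.cast hcast ((Equiv.swap (p0 s t) (p1 s t)) (Fin.cast hcast.symm i)) := by
          rw [cast_swap]
          have f0 : Fin.cast hcast (p0 s t) = (⟨s, by omega⟩ : Fin m) := by
            apply Fin.ext; simp [p0_val]
          have f1 : Fin.cast hcast (p1 s t) = (⟨s+1, by omega⟩ : Fin m) := by
            apply Fin.ext; simp [p1_val]
          rw [f0, f1]
          rfl
        show _ = K' (Fin.cast hcast.symm ((Equiv.swap (⟨s, by omega⟩ : Fin m) ⟨s+1, by omega⟩) i))
        rw [this]
        rfl
      rw [hL]
      exact hB (fun i => K' (Fin.cast hcast.symm i))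
theorem strictMono_of_adjacent {m n' : ℕ} (K : Fin m → Fin n')
    (h : ∀ s : ℕ, ∀ _ : s + 2 ≤ m, K ⟨s, by omega⟩ < K ⟨s+1, by omega⟩) : StrictMono K := by
  have step : ∀ (d : ℕ) (a c : Fin m), (c : ℕ) = (a : ℕ) + d + 1 → K a < K c := by
    intro d
    induction d with
    | zero =>
        intro a c hc
        have h2 : (a : ℕ) + 2 ≤ m := by have := c.isLt; omega
        have hlt := h a h2
        have ha : (⟨(a : ℕ), by omega⟩ : Fin m) = a := by apply Fin.ext; rfl
        have hcc : (⟨(a : ℕ)+1, by omega⟩ : Fin m) = c := by apply Fin.ext; simp; omega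
        rwa [ha, hcc] at hlt
    | succ d ihd =>
        intro a c hc
        have hmid : ((a : ℕ) + d + 1) < m := by have := c.isLt; omega
        have h1 : K a < K ⟨(a : ℕ)+d+1, hmid⟩ := ihd a _ rfl
        have h2n : ((a : ℕ)+d+1) + 2 ≤ m := by have := c.isLt; omega
        have h2 := h ((a : ℕ)+d+1) h2n
        have hcc : (⟨(a : ℕ)+d+1+1, by omega⟩ : Fin m) = c := by apply Fin.ext; simp; omega
        rw [hcc] at h2
        exact lt_trans h1 h2
  intro a c hac
  exact step ((c : ℕ) - (a : ℕ) - 1) a c (by have := (Fin.lt_def.mp hac); omega)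

set_option maxHeartbeats 2000000 in
theorem eq_zero_of_strictMono_repr_zero (b : Basis (Fin n) k V) (m : ℕ) (w : ⨂[k]^m V)
    (hw : w ∈ Wspace (fun i => b i) m)
    (h0 : ∀ K : Fin m → Fin n, StrictMono K → (tb b m).repr w K = 0) : w = 0 := by
  rw [memW_iff] at hw
  set μ : (Fin m → Fin n) → ℕ := fun K => ∑ i : Fin m, (K i : ℕ) * 2 ^ (m - 1 - (i : ℕ)) with hμ
  have key : ∀ (N : ℕ) (K : Fin m → Fin n), μ K = N → (tb b m).repr w K = 0 := by
    intro N
    induction N using Nat.strong_induction_on with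
    | _ N ih =>
      intro K hKN
      by_cases hd : ∃ s : ℕ, ∃ h2 : s + 2 ≤ m, K ⟨s+1, by omega⟩ < K ⟨s, by omega⟩
      · obtain ⟨s, h2, hlt⟩ := hd
        set i0 : Fin m := ⟨s, by omega⟩ with hi0
        set i1 : Fin m := ⟨s+1, by omega⟩ with hi1
        have hne : i0 ≠ i1 := by
          intro hcon
          have := congrArg Fin.val hcon
          simp [hi0, hi1] at this
        set τ := Equiv.swap i0 i1 with hτ
        have hswap := (hw s h2).2 K
        have hsplit : ∀ f : Fin m → Fin n,
            μ f = (f i0 : ℕ) * 2 ^ (m - 1 - s)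
              + ((f i1 : ℕ) * 2 ^ (m - 1 - (s+1))
              + ∑ i ∈ (Finset.univ.erase i0).erase i1, (f i : ℕ) * 2 ^ (m - 1 - (i : ℕ))) := by
          intro f
          show ∑ i : Fin m, (f i : ℕ) * 2 ^ (m - 1 - (i : ℕ)) = _
          rw [← Finset.add_sum_erase _ _ (Finset.mem_univ i0),
            ← Finset.add_sum_erase _ _
              (Finset.mem_erase.mpr ⟨hne.symm, Finset.mem_univ i1⟩)]
        have htail : ∑ i ∈ (Finset.univ.erase i0).erase i1, ((K ∘ τ) i : ℕ) * 2 ^ (m - 1 - (i : ℕ))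
            = ∑ i ∈ (Finset.univ.erase i0).erase i1, (K i : ℕ) * 2 ^ (m - 1 - (i : ℕ)) := by
          refine Finset.sum_congr rfl fun i hi => ?_
          obtain ⟨hne1, hi'⟩ := Finset.mem_erase.mp hi
          obtain ⟨hne0, _⟩ := Finset.mem_erase.mp hi'
          have : (K ∘ τ) i = K i := by
            rw [hτ]
            show K (Equiv.swap i0 i1 i) = K i
            rw [Equiv.swap_apply_of_ne_of_ne hne0 hne1]
          rw [this]
        have hv0 : (K ∘ τ) i0 = K i1 := by
          rw [hτ]; show K (Equiv.swap i0 i1 i0) = K i1; rw [Equiv.swap_apply_left]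
        have hv1 : (K ∘ τ) i1 = K i0 := by
          rw [hτ]; show K (Equiv.swap i0 i1 i1) = K i0; rw [Equiv.swap_apply_right]
        have hdec : μ (K ∘ τ) < μ K := by
          rw [hsplit (K ∘ τ), hsplit K, htail, hv0, hv1]
          have hexp : (2:ℕ) ^ (m - 1 - (s+1)) < 2 ^ (m - 1 - s) :=
            Nat.pow_lt_pow_right one_lt_two (by omega)
          have hlt' : (K i1 : ℕ) < (K i0 : ℕ) := hlt
          nlinarith [hlt', hexp]
        have hz := ih (μ (K ∘ τ)) (by omega) (K ∘ τ) rfl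
        have : (tb b m).repr w (K ∘ τ) = - (tb b m).repr w K := hswap
        rw [hz] at this
        exact neg_eq_zero.mp this.symm
      · by_cases he : ∃ s : ℕ, ∃ h2 : s + 2 ≤ m, K ⟨s, by omega⟩ = K ⟨s+1, by omega⟩
        · obtain ⟨s, h2, heq⟩ := he
          exact (hw s h2).1 K heq
        · apply h0
          push_neg at hd he
          apply strictMono_of_adjacent K
          intro s h2
          rcases lt_trichotomy (K ⟨s, by omega⟩) (K ⟨s+1, by omega⟩) with h | h | h
          · exact h
          · exact absurd h (he s h2)
          · exact absurd h (not_lt_of_ge (hd s h2))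
  apply Basis.ext_elem (tb b m)
  intro K
  rw [key (μ K) K rfl, map_zero]
  rfl

theorem rElt_mem (b : Basis (Fin n) k V) (m : ℕ) (ι : Fin (m+1) → Fin n) :
    rElt (k := k) (fun i => b i) (m+1) ι ∈ Wspace (k := k) (fun i => b i) (m+1) := by
  rw [memW_iff]
  intro s h2
  have hne : (⟨s, by omega⟩ : Fin (m+1)) ≠ ⟨s+1, by omega⟩ := by
    intro hcon
    have := congrArg Fin.val hcon
    simp at this
  constructor
  · intro K hK
    rw [rElt_repr]
    refine Matrix.det_zero_of_row_eq hne ?_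
    funext tcol
    show (if ι tcol = K ⟨s, by omega⟩ then (1:k) else 0)
      = (if ι tcol = K ⟨s+1, by omega⟩ then (1:k) else 0)
    rw [hK]
  · intro K
    rw [rElt_repr, rElt_repr]
    have hsub : (dmat ι (K ∘ (Equiv.swap (⟨s, by omega⟩ : Fin (m+1)) ⟨s+1, by omega⟩)) : Matrix _ _ k)
        = (dmat ι K : Matrix _ _ k).submatrix
            (Equiv.swap (⟨s, by omega⟩ : Fin (m+1)) ⟨s+1, by omega⟩) id := rfl
    rw [hsub, Matrix.det_permute, Equiv.Perm.sign_swap hne]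
    simp

theorem rElt_repr_delta (b : Basis (Fin n) k V) (m : ℕ) (ι κ : Fin (m+1) → Fin n)
    (hι : StrictMono ι) (hκ : StrictMono κ) :
    (tb b (m+1)).repr (rElt (fun i => b i) (m+1) ι) κ = if ι = κ then 1 else 0 := by
  rw [rElt_repr]
  by_cases h : ι = κ
  · subst h
    rw [if_pos rfl]
    have hone : (dmat ι ι : Matrix _ _ k) = 1 := by
      funext s t
      show (if ι t = ι s then (1:k) else 0) = _
      rw [Matrix.one_apply]
      by_cases hst : s = t
      · rw [if_pos (by rw [hst]), if_pos hst]
      · rw [if_neg (fun hc => hst (hι.injective hc).symm), if_neg hst]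
    rw [hone, Matrix.det_one]
  · rw [if_neg h]
    by_cases hz : ∃ s, ∀ t, ι t ≠ κ s
    · obtain ⟨s, hs⟩ := hz
      apply Matrix.det_eq_zero_of_row_eq_zero s
      intro t
      show (if ι t = κ s then (1:k) else 0) = 0
      rw [if_neg (hs t)]
    · exfalso
      push_neg at hz
      apply h
      apply (hι.range_inj hκ).mp
      have hBA : Finset.univ.image κ ⊆ Finset.univ.image ι := by
        intro v hv
        obtain ⟨s, _, rfl⟩ := Finset.mem_image.mp hv
        obtain ⟨t, ht⟩ := hz s
        exact Finset.mem_image.mpr ⟨t, Finset.mem_univ t, ht⟩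
      have hcard : (Finset.univ.image ι).card ≤ (Finset.univ.image κ).card := by
        rw [Finset.card_image_of_injective _ hι.injective,
          Finset.card_image_of_injective _ hκ.injective]
      have hAB : Finset.univ.image ι = Finset.univ.image κ :=
        (Finset.eq_of_subset_of_card_le hBA hcard).symm
      rw [← Set.image_univ, ← Set.image_univ, ← Finset.coe_univ, ← Finset.coe_image,
        ← Finset.coe_image, hAB]

theorem Wspace_eq_bot (b : Basis (Fin n) k V) (m : ℕ) (h : n < m) :
    Wspace (k := k) (fun i => b i) m = (⊥ : Submodule k (⨂[k]^m V)) := by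
  rw [eq_bot_iff]
  intro w hw
  rw [Submodule.mem_bot]
  apply eq_zero_of_strictMono_repr_zero b m w hw
  intro K hK
  exfalso
  have := Fintype.card_le_of_injective K hK.injective
  simp only [Fintype.card_fin] at this
  omega

/-- **Lemma 4.2(b) and (e)**: each `r_{i_1 ⋯ i_m}` lies in `W_m`, the family
`{r_{i_1 ⋯ i_m} : i_1 < ⋯ < i_m}` is a basis of `W_m` (for `m ≥ 2`), and `W_m = 0`
for `m > n`. -/
theorem lemma_4_2_b_e {n : ℕ} (hn : 2 ≤ n) (b : Module.Basis (Fin n) k V) :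
    (∀ (m : ℕ) (ι : Fin (m+2) → Fin n),
      rElt (k := k) (fun i => b i) (m+2) ι ∈ Wspace (k := k) (fun i => b i) (m+2))
    ∧ (∀ m : ℕ, ∃ B : Module.Basis {ι : Fin (m+2) → Fin n // StrictMono ι} k
        (Wspace (k := k) (fun i => b i) (m+2)),
        ∀ ι : {ι : Fin (m+2) → Fin n // StrictMono ι},
          (B ι : ⨂[k]^(m+2) V) = rElt (k := k) (fun i => b i) (m+2) ι.val)
    ∧ (∀ m : ℕ, n < m → Wspace (k := k) (fun i => b i) m = ⊥) := by
  refine ⟨fun m ι => rElt_mem b (m+1) ι, ?_, fun m hm => Wspace_eq_bot b m hm⟩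
  intro m
  classical
  haveI : Fintype {ι : Fin (m+2) → Fin n // StrictMono ι} := Fintype.ofFinite _
  set g : {ι : Fin (m+2) → Fin n // StrictMono ι} → Wspace (k := k) (fun i => b i) (m+2) :=
    fun ι => ⟨rElt (k := k) (fun i => b i) (m+2) ι.val, rElt_mem b (m+1) ι.val⟩ with hg
  have hcoe : ∀ (c : {ι : Fin (m+2) → Fin n // StrictMono ι} → k),
      (((∑ ι, c ι • g ι : Wspace (k := k) (fun i => b i) (m+2))) : ⨂[k]^(m+2) V)
        = ∑ ι, c ι • rElt (k := k) (fun i => b i) (m+2) ι.val := by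
    intro c
    rw [AddSubmonoidClass.coe_finset_sum]
    exact Finset.sum_congr rfl fun ι _ => rfl
  have hrepr : ∀ (c : {ι : Fin (m+2) → Fin n // StrictMono ι} → k)
      (κ : {ι : Fin (m+2) → Fin n // StrictMono ι}),
      (tb b (m+2)).repr (∑ ι, c ι • rElt (k := k) (fun i => b i) (m+2) ι.val) κ.val = c κ := by
    intro c κ
    rw [map_sum, Finsupp.coe_finset_sum, Finset.sum_apply]
    rw [Finset.sum_eq_single κ]
    · rw [map_smul, Finsupp.smul_apply, rElt_repr_delta b (m+1) κ.1 κ.1 κ.2 κ.2,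
        if_pos rfl, smul_eq_mul, mul_one]
    · intro ι _ hι
      rw [map_smul, Finsupp.smul_apply, rElt_repr_delta b (m+1) ι.1 κ.1 ι.2 κ.2,
        if_neg (fun hc => hι (Subtype.ext hc)), smul_eq_mul, mul_zero]
    · intro hκ
      exact absurd (Finset.mem_univ κ) hκ
  have hli : LinearIndependent k g := by
    rw [Fintype.linearIndependent_iff]
    intro c hc κ
    have h1 : (((∑ ι, c ι • g ι : Wspace (k := k) (fun i => b i) (m+2))) : ⨂[k]^(m+2) V) = 0 := by
      rw [hc]; rfl
    rw [hcoe] at h1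
    have h2 := hrepr c κ
    rw [h1] at h2
    simpa using h2.symm
  have hsp : ⊤ ≤ Submodule.span k (Set.range g) := by
    rintro ⟨w, hw⟩ _
    have hmem : w - ∑ ι : {ι : Fin (m+2) → Fin n // StrictMono ι},
        ((tb b (m+2)).repr w ι.val) • rElt (k := k) (fun i => b i) (m+2) ι.val
        ∈ Wspace (k := k) (fun i => b i) (m+2) :=
      sub_mem hw (Submodule.sum_mem _ fun ι _ =>
        Submodule.smul_mem _ _ (rElt_mem b (m+1) ι.1))
    have hzero : w - ∑ ι : {ι : Fin (m+2) → Fin n // StrictMono ι},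
        ((tb b (m+2)).repr w ι.val) • rElt (k := k) (fun i => b i) (m+2) ι.val = 0 := by
      apply eq_zero_of_strictMono_repr_zero b (m+2) _ hmem
      intro κ hκ
      rw [map_sub, Finsupp.sub_apply]
      have h3 := hrepr (fun ι => (tb b (m+2)).repr w ι.val) ⟨κ, hκ⟩
      rw [h3]
      exact sub_self _
    have hwsum : w = ∑ ι : {ι : Fin (m+2) → Fin n // StrictMono ι},
        ((tb b (m+2)).repr w ι.val) • rElt (k := k) (fun i => b i) (m+2) ι.val :=
      sub_eq_zero.mp hzero
    have h4 : (⟨w, hw⟩ : Wspace (k := k) (fun i => b i) (m+2))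
        = ∑ ι, ((tb b (m+2)).repr w ι.val) • g ι := by
      apply Subtype.ext
      rw [hcoe]
      exact hwsum
    rw [h4]
    exact Submodule.sum_mem _ fun ι _ =>
      Submodule.smul_mem _ _ (Submodule.subset_span ⟨ι, rfl⟩)
  refine ⟨Basis.mk hli hsp, fun ι => ?_⟩
  rw [Basis.mk_apply]


end OrePaper
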